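/- arXiv:2601.12388 — 19 statements merged into one kernel-verified Lean document; each statement's English description precedes it below -/
import Mathlib

section
/- Let R be a commutative ring with identity and I an ideal of R. The union of a nonempty chain (with respect to inclusion) of strongly hollow ideals contained in I is a strongly hollow ideal contained in I; consequently, if there exists at least one strongly hollow ideal contained in I, then there exists an inclusion-maximal strongly hollow ideal contained in I. -/
/-- An ideal `I` is strongly hollow if `I ⊆ A + B` implies `I ⊆ A` or `I ⊆ B`. -/
def StronglyHollow {R : Type*} [CommRing R] (I : Ideal R) : Prop :=
  ∀ A B : Ideal R, I ≤ A + B → I ≤ A ∨ I ≤ B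

theorem chain_sSup_stronglyHollow {R : Type*} [CommRing R] (I : Ideal R)
    (S : Set (Ideal R)) (hne : S.Nonempty) (hchain : IsChain (· ≤ ·) S)
    (hS : ∀ K ∈ S, StronglyHollow K ∧ K ≤ I) :
    StronglyHollow (sSup S) ∧ sSup S ≤ I := by
  constructor
  · intro A B hAB
    by_contra h
    push_neg at h
    obtain ⟨hA, hB⟩ := h
    rw [sSup_le_iff] at hA hB
    push_neg at hA hB
    obtain ⟨K1, hK1S, hK1A⟩ := hA
    obtain ⟨K2, hK2S, hK2B⟩ := hB
    rcases hchain.total hK1S hK2S with h12 | h21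
    · rcases (hS K2 hK2S).1 A B ((le_sSup hK2S).trans hAB) with h | h
      · exact hK1A (h12.trans h)
      · exact hK2B h
    · rcases (hS K1 hK1S).1 A B ((le_sSup hK1S).trans hAB) with h | h
      · exact hK1A h
      · exact hK2B (h21.trans h)
  · exact sSup_le fun K hK => (hS K hK).2

theorem stmt0 {R : Type*} [CommRing R] (I : Ideal R) :
    (∀ S : Set (Ideal R), S.Nonempty → IsChain (· ≤ ·) S →
      (∀ K ∈ S, StronglyHollow K ∧ K ≤ I) →
      StronglyHollow (sSup S) ∧ sSup S ≤ I) ∧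
    ((∃ K : Ideal R, StronglyHollow K ∧ K ≤ I) →
      ∃ H : Ideal R, StronglyHollow H ∧ H ≤ I ∧
        ∀ K : Ideal R, StronglyHollow K → K ≤ I → H ≤ K → K = H) := by
  refine ⟨chain_sSup_stronglyHollow I, ?_⟩
  rintro ⟨K0, hK0⟩
  obtain ⟨H, _, hHs, hmax⟩ := zorn_le_nonempty₀
    {K : Ideal R | StronglyHollow K ∧ K ≤ I}
    (fun c hc hchain y hy =>
      ⟨sSup c, chain_sSup_stronglyHollow I c ⟨y, hy⟩ hchain
        (fun K hK => hc hK), fun z hz => le_sSup hz⟩)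
    K0 hK0
  exact ⟨H, hHs.1, hHs.2, fun K hK1 hK2 hHK => le_antisymm (hmax ⟨hK1, hK2⟩ hHK) hHK⟩
end

section
/- Let I be a completely strongly hollow ideal of a commutative ring R, and let Γ_I denote the sum of all ideals J of R with I ⊄ J. Then I ∩ Γ_I is the greatest ideal strictly contained in I, i.e., every ideal J with J ⊊ I satisfies J ⊆ I ∩ Γ_I, and I ∩ Γ_I ⊊ I. -/
/-- An ideal `I` is completely strongly hollow if whenever `I` is contained in the sum
of a family of ideals, it is contained in one of them. -/
def CompletelyStronglyHollow {R : Type*} [CommRing R] (I : Ideal R) : Prop :=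
  ∀ S : Set (Ideal R), I ≤ sSup S → ∃ J ∈ S, I ≤ J

theorem stmt1 {R : Type*} [CommRing R] (I : Ideal R)
    (hI : CompletelyStronglyHollow I) :
    (∀ J : Ideal R, J < I → J ≤ I ⊓ sSup {J : Ideal R | ¬ I ≤ J}) ∧
      I ⊓ sSup {J : Ideal R | ¬ I ≤ J} < I := by
  constructor
  · intro J hJ
    exact le_inf hJ.le (le_sSup (by simpa using fun h => hJ.not_ge h))
  · have : ¬ I ≤ sSup {J : Ideal R | ¬ I ≤ J} := fun hle => by
      obtain ⟨J, hJ, hIJ⟩ := hI _ hle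
      exact hJ hIJ
    exact lt_of_le_of_ne inf_le_left fun h => this (h.symm.trans_le inf_le_right)
end

section
/- Let I, J be ideals of a commutative ring R with I ⊄ J. If I is strongly hollow in R, then (I + J)/J is a strongly hollow ideal of R/J. -/
theorem stmt2 {R : Type*} [CommRing R] (I J : Ideal R) (hIJ : ¬ I ≤ J)
    (hI : StronglyHollow I) :
    StronglyHollow ((I + J).map (Ideal.Quotient.mk J)) := by
  intro A B h
  have hsurj : Function.Surjective (Ideal.Quotient.mk J) :=
    Ideal.Quotient.mk_surjective
  have hmapIJ : (I + J).map (Ideal.Quotient.mk J) = I.map (Ideal.Quotient.mk J) := by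
    rw [Ideal.add_eq_sup, Ideal.map_sup, Ideal.map_quotient_self, sup_bot_eq]
  have hker : RingHom.ker (Ideal.Quotient.mk J) ≤ A.comap (Ideal.Quotient.mk J) := by
    intro x hx
    simp [Ideal.mem_comap, RingHom.mem_ker.mp hx]
  have hmapsup : (A.comap (Ideal.Quotient.mk J) ⊔ B.comap (Ideal.Quotient.mk J)).map
      (Ideal.Quotient.mk J) = A ⊔ B := by
    rw [Ideal.map_sup, Ideal.map_comap_of_surjective _ hsurj,
      Ideal.map_comap_of_surjective _ hsurj]
  have hcomap : (A + B).comap (Ideal.Quotient.mk J)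
      = A.comap (Ideal.Quotient.mk J) + B.comap (Ideal.Quotient.mk J) := by
    rw [Ideal.add_eq_sup, Ideal.add_eq_sup, ← hmapsup,
      Ideal.comap_map_of_surjective _ hsurj, ← RingHom.ker_eq_comap_bot,
      sup_eq_left.mpr (le_trans hker le_sup_left)]
  have hI' : I ≤ A.comap (Ideal.Quotient.mk J) + B.comap (Ideal.Quotient.mk J) := by
    rw [← hcomap]
    intro x hx
    exact h (by rw [hmapIJ]; exact Ideal.mem_map_of_mem _ hx)
  rcases hI _ _ hI' with hle | hle
  · left
    rw [hmapIJ]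
    calc I.map (Ideal.Quotient.mk J) ≤ (A.comap (Ideal.Quotient.mk J)).map _ :=
          Ideal.map_mono hle
      _ = A := Ideal.map_comap_of_surjective _ hsurj A
  · right
    rw [hmapIJ]
    calc I.map (Ideal.Quotient.mk J) ≤ (B.comap (Ideal.Quotient.mk J)).map _ :=
          Ideal.map_mono hle
      _ = B := Ideal.map_comap_of_surjective _ hsurj B
end

section
/- Let φ : R → R' be a surjective homomorphism of commutative rings and let I be a strongly hollow ideal of R with I ⊄ ker φ. Then the image ideal φ(I) is strongly hollow in R'. -/
theorem stmt3 {R R' : Type*} [CommRing R] [CommRing R'] (φ : R →+* R')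
    (hφ : Function.Surjective φ) (I : Ideal R) (hI : StronglyHollow I)
    (hker : ¬ I ≤ RingHom.ker φ) :
    StronglyHollow (I.map φ) := by
  intro A B h
  have h' : I ≤ Ideal.comap φ A + Ideal.comap φ B := by
    refine le_trans (Ideal.le_comap_map.trans (Ideal.comap_mono h)) ?_
    intro x hx
    simp only [Ideal.mem_comap] at hx
    have : φ x ∈ A ⊔ B := hx
    rw [Submodule.mem_sup] at this
    obtain ⟨a, ha, b, hb, hab⟩ := this
    obtain ⟨a', ha'⟩ := hφ a
    obtain ⟨b', hb'⟩ := hφ b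
    have : x - (a' + b') ∈ Ideal.comap φ B := by
      have h0 : φ (x - (a' + b')) = 0 := by
        simp [ha', hb', ← hab]
      simp [Ideal.mem_comap, h0]
    have hx2 : x = a' + ((b' ) + (x - (a' + b'))) := by ring
    rw [hx2]
    exact Submodule.add_mem_sup (by simp [Ideal.mem_comap, ha', ha])
      (Ideal.add_mem _ (by simp [Ideal.mem_comap, hb', hb]) this)
  rcases hI _ _ h' with h1 | h1
  · left; exact (Ideal.map_mono h1).trans (Ideal.map_comap_of_surjective φ hφ A).le
  · right; exact (Ideal.map_mono h1).trans (Ideal.map_comap_of_surjective φ hφ B).le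
end

section
/- Let φ : R → R' be a surjective homomorphism of commutative rings and let J' be a strongly hollow ideal of R'. Then for all ideals A, B of R, φ⁻¹(J') ⊆ A + B implies φ⁻¹(J') ⊆ A + ker φ or φ⁻¹(J') ⊆ B + ker φ. -/
theorem stmt4 {R R' : Type*} [CommRing R] [CommRing R'] (φ : R →+* R')
    (hφ : Function.Surjective φ) (J' : Ideal R') (hJ' : StronglyHollow J') :
    ∀ A B : Ideal R, J'.comap φ ≤ A + B →
      J'.comap φ ≤ A + RingHom.ker φ ∨ J'.comap φ ≤ B + RingHom.ker φ := by
  intro A B h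
  have h' : J' ≤ A.map φ + B.map φ := by
    rw [Submodule.add_eq_sup, ← Ideal.map_sup, ← Submodule.add_eq_sup, ← Ideal.map_comap_of_surjective φ hφ J']
    exact Ideal.map_mono h
  rcases hJ' _ _ h' with h1 | h1
  · left
    calc J'.comap φ ≤ (A.map φ).comap φ := Ideal.comap_mono h1
      _ = A + RingHom.ker φ := by
        rw [Ideal.comap_map_of_surjective φ hφ]; rfl
  · right
    calc J'.comap φ ≤ (B.map φ).comap φ := Ideal.comap_mono h1
      _ = B + RingHom.ker φ := by
        rw [Ideal.comap_map_of_surjective φ hφ]; rfl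
end

section
/- Let φ : R → R' be a surjective homomorphism of commutative rings, let J' be a strongly hollow ideal of R', and set H := φ⁻¹(J'). If ker φ is small in H (that is, for every ideal L of R with L ⊆ H, ker φ + L = H implies L = H), then H is a strongly hollow ideal of R. -/
lemma stmt5_aux {R R' : Type*} [CommRing R] [CommRing R'] (φ : R →+* R')
    (hφ : Function.Surjective φ) (J' : Ideal R')
    (hsmall : ∀ L : Ideal R, L ≤ J'.comap φ →
      RingHom.ker φ + L = J'.comap φ → L = J'.comap φ)
    (A : Ideal R) (hA : J' ≤ A.map φ) : J'.comap φ ≤ A := by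
  have hker : RingHom.ker φ ≤ J'.comap φ := by
    intro x hx
    simp only [RingHom.mem_ker] at hx
    simp [Ideal.mem_comap, hx]
  have h1 : J'.comap φ ≤ A ⊔ RingHom.ker φ := by
    calc J'.comap φ ≤ (A.map φ).comap φ := Ideal.comap_mono hA
    _ = A ⊔ RingHom.ker φ := by
        rw [Ideal.comap_map_of_surjective φ hφ]; rfl
  have key : RingHom.ker φ + (A ⊓ J'.comap φ) = J'.comap φ := by
    apply le_antisymm
    · rw [Submodule.add_eq_sup]
      exact sup_le hker inf_le_right
    · intro x hx
      obtain ⟨a, ha, k, hk, hak⟩ := Submodule.mem_sup.mp (h1 hx)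
      have haH : a ∈ A ⊓ J'.comap φ := by
        refine ⟨ha, ?_⟩
        have : a = x - k := by rw [← hak]; ring
        rw [this]
        exact Submodule.sub_mem _ hx (hker hk)
      rw [Submodule.add_eq_sup]
      exact Submodule.mem_sup.mpr ⟨k, hk, a, haH, by rw [← hak]; ring⟩
  have := hsmall (A ⊓ J'.comap φ) inf_le_right key
  rw [← this]
  exact inf_le_left

theorem stmt5 {R R' : Type*} [CommRing R] [CommRing R'] (φ : R →+* R')
    (hφ : Function.Surjective φ) (J' : Ideal R') (hJ' : StronglyHollow J')
    (hsmall : ∀ L : Ideal R, L ≤ J'.comap φ →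
      RingHom.ker φ + L = J'.comap φ → L = J'.comap φ) :
    StronglyHollow (J'.comap φ) := by
  intro A B hAB
  have hJ : J' ≤ A.map φ + B.map φ := by
    have : J' = (J'.comap φ).map φ := (Ideal.map_comap_of_surjective φ hφ J').symm
    rw [this, Submodule.add_eq_sup, ← Ideal.map_sup]
    exact Ideal.map_mono (by rwa [Submodule.add_eq_sup] at hAB)
  rcases hJ' _ _ hJ with h | h
  · exact Or.inl (stmt5_aux φ hφ J' hsmall A h)
  · exact Or.inr (stmt5_aux φ hφ J' hsmall B h)
end

section
/- Let R be a commutative ring and I an ideal of R. Then I is completely strongly hollow if and only if there exists an ideal K of R such that I is the least ideal (by inclusion) not contained in K, i.e., I ⊄ K and every ideal J with J ⊄ K satisfies I ⊆ J. -/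
theorem stmt6 {R : Type*} [CommRing R] (I : Ideal R) :
    CompletelyStronglyHollow I ↔
      ∃ K : Ideal R, ¬ I ≤ K ∧ ∀ J : Ideal R, ¬ J ≤ K → I ≤ J := by
  constructor
  · intro h
    refine ⟨sSup {J : Ideal R | ¬ I ≤ J}, ?_, ?_⟩
    · intro hI
      obtain ⟨J, hJ, hIJ⟩ := h _ hI
      exact hJ hIJ
    · intro J hJ
      by_contra hIJ
      exact hJ (le_sSup hIJ)
  · rintro ⟨K, hIK, hK⟩ S hS
    by_contra hc
    push_neg at hc
    have : sSup S ≤ K := sSup_le fun J hJ => by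
      by_contra hJK
      exact hc J hJ (hK J hJK)
    exact hIK (hS.trans this)
end

section
/- Let I be a nonzero ideal of a commutative ring R. Then I is completely strongly hollow if and only if there exists a greatest ideal of R (by inclusion) among the ideals not containing I, i.e., an ideal J with I ⊄ J such that every ideal K with I ⊄ K satisfies K ⊆ J. -/
theorem stmt7 {R : Type*} [CommRing R] (I : Ideal R) (hI : I ≠ ⊥) :
    CompletelyStronglyHollow I ↔
      ∃ J : Ideal R, ¬ I ≤ J ∧ ∀ K : Ideal R, ¬ I ≤ K → K ≤ J := by
  constructor
  · intro h
    refine ⟨sSup {K : Ideal R | ¬ I ≤ K}, ?_, fun K hK => le_sSup hK⟩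
    intro hle
    obtain ⟨J, hJ, hIJ⟩ := h _ hle
    exact hJ hIJ
  · rintro ⟨J, hJ, hmax⟩ S hle
    by_contra hc
    push_neg at hc
    exact hJ (hle.trans (sSup_le fun K hK => hmax K (hc K hK)))
end

section
/- Let R be an arithmetical ring (a ring whose lattice of ideals is distributive, equivalently (A+B) ∩ C = (A∩C) + (B∩C) for all ideals; equivalently ideals localize to chains) and I an ideal of R. If there exists an ideal K such that I is minimal (by inclusion) among ideals not contained in K, then I is completely strongly hollow. -/
theorem stmt9 {R : Type*} [CommRing R]
    (harith : ∀ A B C : Ideal R, A ⊓ (B + C) = A ⊓ B + A ⊓ C)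
    (I : Ideal R)
    (hmin : ∃ K : Ideal R, ¬ I ≤ K ∧ ∀ J : Ideal R, J < I → J ≤ K) :
    CompletelyStronglyHollow I := by
  obtain ⟨K, hIK, hK⟩ := hmin
  intro S hS
  by_contra h
  push_neg at h
  apply hIK
  have hJK : ∀ J ∈ S, I ⊓ J ≤ K := by
    intro J hJ
    apply hK
    refine lt_of_le_of_ne inf_le_left ?_
    intro he
    exact h J hJ (he ▸ inf_le_right)
  have key : ∀ t : Finset S, I ⊓ (⨆ i ∈ t, (i : Ideal R)) ≤ K := by
    classical
    intro t
    induction t using Finset.induction with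
    | empty => simp
    | insert hni ih =>
      rename_i a s'
      rw [Finset.iSup_insert, ← Submodule.add_eq_sup, harith]
      rw [Submodule.add_eq_sup]
      exact sup_le (hJK hni hni.2) s'
  intro x hx
  have hx' : x ∈ sSup S := hS hx
  rw [sSup_eq_iSup'] at hx'
  obtain ⟨s, hs⟩ := Submodule.exists_finset_of_mem_iSup _ hx'
  exact key s ⟨hx, hs⟩
end

section
/- Let K be a strongly irreducible ideal of a commutative ring R. If there exists an ideal I that is minimal (by inclusion) with respect to not being contained in K, then I is completely strongly hollow. -/
def StronglyIrreducible {R : Type*} [CommRing R] (K : Ideal R) : Prop :=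
  ∀ A B : Ideal R, A ⊓ B ≤ K → A ≤ K ∨ B ≤ K

theorem stmt10 {R : Type*} [CommRing R] (K I : Ideal R)
    (hK : StronglyIrreducible K)
    (hImin : ¬ I ≤ K ∧ ∀ J : Ideal R, J < I → J ≤ K) :
    CompletelyStronglyHollow I := by
  intro S hS
  by_contra hcon
  push_neg at hcon
  have hall : ∀ J ∈ S, J ≤ K := by
    intro J hJ
    have hlt : I ⊓ J < I :=
      lt_of_le_of_ne inf_le_left (fun he => hcon J hJ (he ▸ inf_le_right))
    rcases hK I J (hImin.2 _ hlt) with h1 | h1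
    · exact absurd h1 hImin.1
    · exact h1
  exact hImin.1 (hS.trans (sSup_le hall))
end

section
/- Let I be a strongly hollow ideal of a commutative ring R. If there exists an ideal K maximal (by inclusion) with respect to not containing I, then K is strongly irreducible. -/
theorem stmt11 {R : Type*} [CommRing R] (I K : Ideal R)
    (hI : StronglyHollow I)
    (hKmax : ¬ I ≤ K ∧ ∀ J : Ideal R, K < J → I ≤ J) :
    StronglyIrreducible K := by
  obtain ⟨hIK, hmax⟩ := hKmax
  intro A B hAB
  by_contra h
  push_neg at h
  obtain ⟨hA, hB⟩ := h
  have hIA : I ≤ A := by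
    have : I ≤ K + A := hmax _ (lt_of_le_of_ne le_sup_left (by
      intro hEq
      exact hA (le_trans le_sup_right (le_of_eq hEq.symm))))
    rcases hI K A this with h1 | h1
    · exact absurd h1 hIK
    · exact h1
  have hIB : I ≤ B := by
    have : I ≤ K + B := hmax _ (lt_of_le_of_ne le_sup_left (by
      intro hEq
      exact hB (le_trans le_sup_right (le_of_eq hEq.symm))))
    rcases hI K B this with h1 | h1
    · exact absurd h1 hIK
    · exact h1
  exact hIK (le_trans (le_inf hIA hIB) hAB)
end

section
/- Let I be a strongly hollow ideal of a commutative ring R with I ⊄ J(R), where J(R) is the Jacobson radical. Then I is completely strongly hollow, and Γ_I (the sum of all ideals not containing I) equals the unique maximal ideal M of R not containing I. -/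
theorem stmt12 {R : Type*} [CommRing R] (I : Ideal R) (hI : StronglyHollow I)
    (hJac : ¬ I ≤ (⊥ : Ideal R).jacobson) :
    CompletelyStronglyHollow I ∧
      ∃ M : Ideal R, M.IsMaximal ∧ ¬ I ≤ M ∧
        (∀ N : Ideal R, N.IsMaximal → ¬ I ≤ N → N = M) ∧
        sSup {J : Ideal R | ¬ I ≤ J} = M := by
  -- obtain a maximal ideal M not containing I
  obtain ⟨M, hM, hIM⟩ : ∃ M : Ideal R, M.IsMaximal ∧ ¬ I ≤ M := by
    by_contra h
    push_neg at h
    exact hJac (le_sInf (fun J hJ => h J hJ.2))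
  -- every ideal not containing I is ≤ M
  have key : ∀ J : Ideal R, ¬ I ≤ J → J ≤ M := by
    intro J hJ
    by_contra hJM
    have htop : J + M = ⊤ := hM.1.2 _ (lt_of_le_of_ne le_sup_right
      (fun he => hJM (he ▸ le_sup_left)))
    rcases hI J M (htop ▸ le_top) with h | h
    · exact hJ h
    · exact hIM h
  constructor
  · intro S hS
    by_contra h
    push_neg at h
    exact hIM (hS.trans (sSup_le (fun J hJ => key J (h J hJ))))
  · refine ⟨M, hM, hIM, ?_, ?_⟩
    · intro N hN hIN
      by_contra hne
      have : N + M = ⊤ := by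
        refine hN.1.2 _ (lt_of_le_of_ne le_sup_left (fun he => hne ?_))
        have hMN : M ≤ N := by rw [he]; exact le_sup_right
        exact le_antisymm (key N hIN) hMN
      rcases hI N M (this ▸ le_top) with h | h
      · exact hIN h
      · exact hIM h
    · exact le_antisymm (sSup_le (fun J hJ => key J hJ)) (le_sSup hIM)
end

section
/- Let I be a strongly hollow ideal of a commutative ring R with I ⊄ J(R). Then I is minimal with respect to not being contained in J(R): every ideal J with (0) ⊊ J ⊊ I satisfies J ⊆ J(R). -/
theorem stmt13 {R : Type*} [CommRing R] (I : Ideal R) (hI : StronglyHollow I)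
    (hJac : ¬ I ≤ (⊥ : Ideal R).jacobson) :
    ∀ J : Ideal R, ⊥ < J → J < I → J ≤ (⊥ : Ideal R).jacobson := by
  intro J _ hJI
  rw [Ideal.jacobson]
  refine le_sInf ?_
  rintro M ⟨-, hM⟩
  by_contra hJM
  have hco : IsCoatom M := Ideal.isMaximal_def.mp hM
  have htop : M ⊔ J = ⊤ := hco.2 _ (lt_of_le_of_ne le_sup_left (by
    intro h
    exact hJM (h ▸ le_sup_right)))
  have := hI J M (by rw [Submodule.add_eq_sup, sup_comm, htop]; exact le_top)
  rcases this with h | h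
  · exact absurd h (not_le_of_gt hJI)
  · exact hJM (le_trans hJI.le h)
end

section
/- Let R be an integral domain and I a proper strongly hollow ideal of R. Then I ⊆ J(R), the Jacobson radical of R. -/
theorem stmt14 {R : Type*} [CommRing R] [IsDomain R] (I : Ideal R)
    (hproper : I ≠ ⊤) (hI : StronglyHollow I) :
    I ≤ (⊥ : Ideal R).jacobson := by
  rw [Ideal.jacobson]
  refine le_sInf ?_
  rintro M ⟨-, hM⟩
  by_contra hIM
  have hlt : M < M ⊔ I := lt_of_le_of_ne le_sup_left
    (fun h => hIM (le_sup_right.trans h.ge))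
  have htop : M ⊔ I = ⊤ := hM.out.2 _ hlt
  obtain ⟨m, hm, a, ha, hma⟩ := Submodule.mem_sup.mp (htop ▸ Submodule.mem_top :
    (1 : R) ∈ M ⊔ I)
  have hane : a ≠ 0 := by
    rintro rfl
    apply hM.ne_top
    apply Ideal.eq_top_of_isUnit_mem M hm
    simp only [add_zero] at hma
    rw [hma]; exact isUnit_one
  have h1 : I ≤ M + Ideal.span {a} := by
    intro x hx
    have hx' : x = x * m + x * a := by rw [← mul_add, hma, mul_one]
    rw [hx']
    exact Submodule.add_mem_sup (M.mul_mem_left x hm)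
      (Ideal.mul_mem_left _ x (Ideal.subset_span rfl))
  rcases hI _ _ h1 with h | h
  · exact hIM h
  · have h2 : I ≤ Ideal.span {a * m} + Ideal.span {a * a} := by
      intro x hx
      obtain ⟨r, hr⟩ := Ideal.mem_span_singleton'.mp (h hx)
      have hx' : x = r * (a * m) + r * (a * a) := by
        linear_combination (-r * a) * hma - hr
      rw [hx']
      exact Submodule.add_mem_sup (Ideal.mem_span_singleton'.mpr ⟨r, rfl⟩)
        (Ideal.mem_span_singleton'.mpr ⟨r, rfl⟩)
    rcases hI _ _ h2 with h' | h'
    · obtain ⟨r, hr⟩ := Ideal.mem_span_singleton'.mp (h' ha)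
      have hcancel : m * r = 1 := by
        have : a * (m * r) = a * 1 := by ring_nf; linear_combination hr
        exact mul_left_cancel₀ hane this
      exact hM.ne_top (Ideal.eq_top_of_isUnit_mem M hm
        (IsUnit.of_mul_eq_one (a := m) r hcancel))
    · obtain ⟨r, hr⟩ := Ideal.mem_span_singleton'.mp (h' ha)
      have hcancel : a * r = 1 := by
        have : a * (a * r) = a * 1 := by ring_nf; linear_combination hr
        exact mul_left_cancel₀ hane this
      exact hproper (Ideal.eq_top_of_isUnit_mem I ha
        (IsUnit.of_mul_eq_one (a := a) r hcancel))
end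

section
/- Let R be a semi-primitive integral domain (i.e., J(R) = 0). Then R has a nonzero strongly hollow ideal if and only if R is a field. -/
theorem stmt15 {R : Type*} [CommRing R] [IsDomain R]
    (hsemi : (⊥ : Ideal R).jacobson = ⊥) :
    (∃ I : Ideal R, I ≠ ⊥ ∧ StronglyHollow I) ↔ IsField R := by
  constructor
  · rintro ⟨I, hI, hSH⟩
    by_contra hnf
    obtain ⟨x, hxI, hx0⟩ := Submodule.ne_bot_iff I |>.mp hI
    -- claim: I is contained in every maximal ideal
    have claim : ∀ M : Ideal R, M.IsMaximal → I ≤ M := by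
      intro M hM
      by_contra hIM
      have hMbot : ⊥ < M := @Ideal.bot_lt_of_maximal _ _ _ M hM hnf
      obtain ⟨m, hmM, hm0⟩ := Submodule.ne_bot_iff M |>.mp hMbot.ne'
      have hxm : x * m ∈ (⊥ : Ideal R).jacobson := by
        rw [Ideal.jacobson]
        rw [Submodule.mem_sInf]
        rintro N ⟨-, hN⟩
        by_cases hNM : N = M
        · subst hNM
          exact Ideal.mul_mem_left _ _ hmM
        · have : I ≤ N := by
            rcases hSH M N (by
              rw [Submodule.add_eq_sup, Ideal.IsMaximal.coprime_of_ne hM hN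
                (fun h => hNM h.symm)]
              exact le_top) with h | h
            · exact absurd h hIM
            · exact h
          exact Ideal.mul_mem_right _ _ (this hxI)
      rw [hsemi, Ideal.mem_bot] at hxm
      rcases mul_eq_zero.mp hxm with h | h
      · exact hx0 h
      · exact hm0 h
    have : I ≤ (⊥ : Ideal R).jacobson := by
      rw [Ideal.jacobson]
      exact le_sInf fun N hN => claim N hN.2
    rw [hsemi, le_bot_iff] at this
    exact hI this
  · intro hF
    letI := hF.toField
    refine ⟨⊤, ?_, ?_⟩
    · intro h
      exact one_ne_zero ((Ideal.mem_bot).mp (h ▸ Submodule.mem_top (x := (1 : R))))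
    · intro A B h
      rcases A.eq_bot_or_top with rfl | rfl
      · right
        rwa [Submodule.add_eq_sup, bot_sup_eq] at h
      · left; exact le_rfl
end

section
/- Let R be a principal ideal domain. Then R admits a nonzero proper strongly hollow ideal if and only if R is a discrete valuation ring. -/
lemma aux_coprime {R : Type*} [CommRing R] [IsDomain R] [IsPrincipalIdealRing R]
    {p q : R} (hp : Prime p) (hq : Prime q) (hpq : ¬ Associated p q) (m n : ℕ) :
    Ideal.span {p ^ m} ⊔ Ideal.span {q ^ n} = ⊤ := by
  set S : Ideal R := Ideal.span {p ^ m} ⊔ Ideal.span {q ^ n} with hS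
  haveI : S.IsPrincipal := IsPrincipalIdealRing.principal S
  set d : R := Submodule.IsPrincipal.generator S with hd
  have hpm : p ^ m ∈ S := le_sup_left (α := Ideal R)
    (Ideal.subset_span (Set.mem_singleton _))
  have hqn : q ^ n ∈ S := le_sup_right (α := Ideal R)
    (Ideal.subset_span (Set.mem_singleton _))
  have hdp : d ∣ p ^ m := (Submodule.IsPrincipal.mem_iff_generator_dvd S).mp hpm
  have hdq : d ∣ q ^ n := (Submodule.IsPrincipal.mem_iff_generator_dvd S).mp hqn
  have hd0 : d ≠ 0 := by
    intro h0
    rw [h0] at hdp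
    exact pow_ne_zero m hp.ne_zero (zero_dvd_iff.mp hdp)
  have hdu : IsUnit d := by
    by_contra hdu
    obtain ⟨r, hr, hrd⟩ := WfDvdMonoid.exists_irreducible_factor hdu hd0
    have hrp : Prime r := (irreducible_iff_prime).mp hr
    have h1 : r ∣ p := hrp.dvd_of_dvd_pow (hrd.trans hdp)
    have h2 : r ∣ q := hrp.dvd_of_dvd_pow (hrd.trans hdq)
    exact hpq ((hrp.associated_of_dvd hp h1).symm.trans (hrp.associated_of_dvd hq h2))
  have : S = Ideal.span {d} := (Ideal.span_singleton_generator S).symm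
  rw [this, Ideal.span_singleton_eq_top]
  exact hdu

theorem stmt16 {R : Type*} [CommRing R] [IsDomain R] [IsPrincipalIdealRing R] :
    (∃ I : Ideal R, I ≠ ⊥ ∧ I ≠ ⊤ ∧ StronglyHollow I) ↔
      IsDiscreteValuationRing R := by
  constructor
  · rintro ⟨I, hI0, hIT, hSH⟩
    obtain ⟨a, rfl⟩ := (IsPrincipalIdealRing.principal I).1
    rw [Ideal.submodule_span_eq] at hI0 hIT hSH
    have ha0 : a ≠ 0 := fun h => hI0 (by rw [h, Ideal.span_singleton_eq_bot])
    have hau : ¬ IsUnit a := fun h => hIT (by rwa [Ideal.span_singleton_eq_top])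
    obtain ⟨p, hpirr, hpa⟩ := WfDvdMonoid.exists_irreducible_factor hau ha0
    have hp : Prime p := (irreducible_iff_prime).mp hpirr
    -- every prime is associated to p
    have key : ∀ q : R, Prime q → Associated p q := by
      intro q hq
      by_contra hpq
      obtain ⟨n, hn⟩ := FiniteMultiplicity.of_prime_left hp ha0
      obtain ⟨m, hm⟩ := FiniteMultiplicity.of_prime_left hq ha0
      have htop : Ideal.span {a} ≤ Ideal.span {p ^ (n + 1)} + Ideal.span {q ^ (m + 1)} := by
        rw [Submodule.add_eq_sup, aux_coprime hp hq hpq (n + 1) (m + 1)]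
        exact le_top
      rcases hSH _ _ htop with h | h
      · exact hn ((Ideal.span_singleton_le_span_singleton).mp h)
      · exact hm ((Ideal.span_singleton_le_span_singleton).mp h)
    rw [IsDiscreteValuationRing.iff_pid_with_one_nonzero_prime]
    refine ⟨inferInstance, Ideal.span {p}, ⟨?_, ?_⟩, ?_⟩
    · exact fun h => hp.ne_zero (Ideal.span_singleton_eq_bot.mp h)
    · exact (Ideal.span_singleton_prime hp.ne_zero).mpr hp
    · rintro Q ⟨hQ0, hQprime⟩
      haveI : Q.IsPrincipal := IsPrincipalIdealRing.principal Q
      have hg : Prime (Submodule.IsPrincipal.generator Q) :=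
        Submodule.IsPrincipal.prime_generator_of_isPrime Q hQ0
      have : Associated p (Submodule.IsPrincipal.generator Q) := key _ hg
      rw [← Ideal.span_singleton_generator Q,
        Ideal.span_singleton_eq_span_singleton]
      exact this.symm
  · intro hDVR
    haveI := hDVR.toIsLocalRing
    refine ⟨IsLocalRing.maximalIdeal R, IsDiscreteValuationRing.not_a_field R,
      (IsLocalRing.maximalIdeal.isMaximal R).ne_top, ?_⟩
    intro A B hAB
    haveI : ValuationRing R := inferInstance
    rcases Std.Total.total (r := (· ≤ · : Ideal R → Ideal R → Prop)) A B with h | h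
    · right
      rwa [Submodule.add_eq_sup, sup_eq_right.mpr h] at hAB
    · left
      rwa [Submodule.add_eq_sup, sup_eq_left.mpr h] at hAB
end

section
/- Let R be a commutative ring and I ⊆ J(R) a strongly hollow ideal of R. Then for every maximal ideal M of R with dim_{R/M}(M/M²) ≥ 2, one has I ⊆ M². -/
theorem stmt17 {R : Type*} [CommRing R] (I : Ideal R)
    (hIJ : I ≤ (⊥ : Ideal R).jacobson) (hI : StronglyHollow I) :
    ∀ M : Ideal R, M.IsMaximal →
      2 ≤ Module.rank (R ⧸ M) M.Cotangent → I ≤ M ^ 2 := by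
  intro M hM hrank
  haveI := hM
  letI : Field (R ⧸ M) := Ideal.Quotient.field M
  have hJM : (⊥ : Ideal R).jacobson ≤ M := sInf_le ⟨bot_le, hM⟩
  have hIM : I ≤ M := hIJ.trans hJM
  by_contra hcon
  rw [SetLike.not_le_iff_exists] at hcon
  obtain ⟨a, haI, ha2⟩ := hcon
  have haM : a ∈ M := hIM haI
  set V := M.Cotangent
  set av : V := M.toCotangent ⟨a, haM⟩ with hav_def
  have hav : av ≠ 0 := fun h => ha2 ((M.toCotangent_eq_zero _).mp h)
  -- find bv not in span of av
  have hbv : ∃ bv : V, bv ∉ Submodule.span (R ⧸ M) {av} := by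
    by_contra h
    push_neg at h
    have hsp : Submodule.span (R ⧸ M) ({av} : Set V) = ⊤ :=
      eq_top_iff.mpr fun v _ => h v
    have h1 := rank_span_le (R := R ⧸ M) ({av} : Set V)
    rw [hsp, rank_top, Cardinal.mk_singleton] at h1
    exact absurd (hrank.trans h1) (by norm_num)
  obtain ⟨bv, hbv⟩ := hbv
  have hab : av ∉ Submodule.span (R ⧸ M) {bv} := by
    intro h
    obtain ⟨c, hc⟩ := Submodule.mem_span_singleton.mp h
    rcases eq_or_ne c 0 with rfl | hc0
    · rw [zero_smul] at hc; exact hav hc.symm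
    · exact hbv (Submodule.mem_span_singleton.mpr
        ⟨c⁻¹, by rw [← hc, smul_smul, inv_mul_cancel₀ hc0, one_smul]⟩)
  -- build functional f with f av = 1, f bv = 0
  have hf : ∃ f : V →ₗ[R ⧸ M] (R ⧸ M), f av = 1 ∧ f bv = 0 := by
    set W := Submodule.span (R ⧸ M) ({bv} : Set V)
    have hpav : W.mkQ av ≠ 0 := by
      rw [Submodule.mkQ_apply, ne_eq, Submodule.Quotient.mk_eq_zero]
      exact hab
    have := (Module.forall_dual_apply_eq_zero_iff (R ⧸ M) (W.mkQ av)).not.mpr hpav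
    push_neg at this
    obtain ⟨φ, hφ⟩ := this
    refine ⟨(φ (W.mkQ av))⁻¹ • (φ.comp W.mkQ), ?_, ?_⟩
    · show (φ (W.mkQ av))⁻¹ • φ (W.mkQ av) = 1
      rw [smul_eq_mul, inv_mul_cancel₀ hφ]
    · show (φ (W.mkQ av))⁻¹ • φ (W.mkQ bv) = 0
      have h0 : W.mkQ bv = 0 := by
        rw [Submodule.mkQ_apply, Submodule.Quotient.mk_eq_zero]
        exact Submodule.mem_span_singleton_self bv
      rw [h0, map_zero, smul_zero]
  -- build functional g with g av = 0, g bv = 1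
  have hg : ∃ g : V →ₗ[R ⧸ M] (R ⧸ M), g av = 0 ∧ g bv = 1 := by
    set W := Submodule.span (R ⧸ M) ({av} : Set V)
    have hpbv : W.mkQ bv ≠ 0 := by
      rw [Submodule.mkQ_apply, ne_eq, Submodule.Quotient.mk_eq_zero]
      exact hbv
    have := (Module.forall_dual_apply_eq_zero_iff (R ⧸ M) (W.mkQ bv)).not.mpr hpbv
    push_neg at this
    obtain ⟨φ, hφ⟩ := this
    refine ⟨(φ (W.mkQ bv))⁻¹ • (φ.comp W.mkQ), ?_, ?_⟩
    · show (φ (W.mkQ bv))⁻¹ • φ (W.mkQ av) = 0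
      have h0 : W.mkQ av = 0 := by
        rw [Submodule.mkQ_apply, Submodule.Quotient.mk_eq_zero]
        exact Submodule.mem_span_singleton_self av
      rw [h0, map_zero, smul_zero]
    · show (φ (W.mkQ bv))⁻¹ • φ (W.mkQ bv) = 1
      rw [smul_eq_mul, inv_mul_cancel₀ hφ]
  obtain ⟨f, hfa, hfb⟩ := hf
  obtain ⟨g, hga, hgb⟩ := hg
  set h : V →ₗ[R ⧸ M] (R ⧸ M) := f + g with hh_def
  have hha : h av = 1 := by simp [hh_def, hfa, hga]
  have hhb : h bv = 1 := by simp [hh_def, hfb, hgb]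
  -- the two ideals
  set A : Ideal R :=
    (Submodule.comap M.toCotangent ((LinearMap.ker h).restrictScalars R)).map M.subtype with hA
  set B : Ideal R :=
    (Submodule.comap M.toCotangent ((LinearMap.ker f).restrictScalars R)).map M.subtype with hB
  have hsum : I ≤ A + B := by
    intro x hx
    have hxM : x ∈ M := hIM hx
    set t : V := M.toCotangent ⟨x, hxM⟩ with ht
    obtain ⟨y, hy⟩ := M.toCotangent_surjective (t - (h t) • bv)
    have hxy : x = (y : R) + (x - (y : R)) := by ring
    rw [Submodule.add_eq_sup, hxy]
    refine Submodule.add_mem_sup ?_ ?_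
    · exact ⟨y, by simp [LinearMap.mem_ker, hy, hhb, mul_comm], rfl⟩
    · refine ⟨⟨x - (y : R), M.sub_mem hxM y.2⟩, ?_, rfl⟩
      have : M.toCotangent ⟨x - (y : R), M.sub_mem hxM y.2⟩ = t - M.toCotangent y := by
        rw [← map_sub]; rfl
      simp [LinearMap.mem_ker, this, hy, hfb]
  rcases hI A B hsum with hIA | hIB
  · obtain ⟨y, hyk, hya⟩ := hIA haI
    have : y = ⟨a, haM⟩ := Subtype.ext hya
    rw [this] at hyk
    simp only [SetLike.mem_coe, Submodule.mem_comap, Submodule.restrictScalars_mem,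
      LinearMap.mem_ker] at hyk
    rw [show M.toCotangent ⟨a, haM⟩ = av from rfl, hha] at hyk
    exact one_ne_zero hyk
  · obtain ⟨y, hyk, hya⟩ := hIB haI
    have : y = ⟨a, haM⟩ := Subtype.ext hya
    rw [this] at hyk
    simp only [SetLike.mem_coe, Submodule.mem_comap, Submodule.restrictScalars_mem,
      LinearMap.mem_ker] at hyk
    rw [show M.toCotangent ⟨a, haM⟩ = av from rfl, hfa] at hyk
    exact one_ne_zero hyk
end

section
/- Let R be a commutative ring and I a strongly hollow ideal of R. Then there is at most one maximal ideal M of R such that I ⊄ Mⁿ for some natural number n. Equivalently, if M and N are distinct maximal ideals with I ⊄ M^i and I ⊄ N^j for some i, j ∈ ℕ, a contradiction arises since M^i + N^j = R. -/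
theorem stmt18 {R : Type*} [CommRing R] (I : Ideal R) (hI : StronglyHollow I) :
    ∀ M N : Ideal R, M.IsMaximal → N.IsMaximal →
      (∃ i : ℕ, ¬ I ≤ M ^ i) → (∃ j : ℕ, ¬ I ≤ N ^ j) → M = N := by
  intro M N hM hN ⟨i, hi⟩ ⟨j, hj⟩
  by_contra hne
  have hcop : IsCoprime M N := (Ideal.isCoprime_iff_sup_eq).mpr
    (Ideal.IsMaximal.coprime_of_ne hM hN hne)
  have hcop2 : IsCoprime (M ^ i) (N ^ j) := hcop.pow
  have : I ≤ M ^ i + N ^ j := by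
    rw [Submodule.add_eq_sup, (Ideal.isCoprime_iff_sup_eq).mp hcop2]
    exact le_top
  rcases hI _ _ this with h | h
  · exact hi h
  · exact hj h
end

section
/- Every strongly irreducible ideal of an Artinian commutative ring R is completely strongly irreducible: if K is a strongly irreducible ideal and {C_ω} is a family of ideals with ∩_ω C_ω ⊆ K, then C_ω ⊆ K for some ω. -/
theorem finset_inf_le {R : Type*} [CommRing R] (K : Ideal R)
    (hK : StronglyIrreducible K) :
    ∀ F : Finset (Ideal R), F.Nonempty → F.inf id ≤ K → ∃ C ∈ F, C ≤ K := by
  intro F hF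
  induction hF using Finset.Nonempty.cons_induction with
  | singleton a => intro h; exact ⟨a, by simp, by simpa using h⟩
  | cons a s ha hs ih =>
    intro h
    rw [Finset.inf_cons] at h
    rcases hK _ _ h with h1 | h2
    · exact ⟨a, Finset.mem_cons_self a s, h1⟩
    · obtain ⟨C, hC, hCK⟩ := ih h2
      exact ⟨C, Finset.mem_cons_of_mem hC, hCK⟩

theorem stmt19 {R : Type*} [CommRing R] [IsArtinianRing R] (K : Ideal R)
    (hK : StronglyIrreducible K) :
    ∀ S : Set (Ideal R), S.Nonempty → sInf S ≤ K → ∃ C ∈ S, C ≤ K := by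
  classical
  intro S hS hinf
  set T : Set (Ideal R) := {I | ∃ F : Finset (Ideal R), F.Nonempty ∧ ↑F ⊆ S ∧ I = F.inf id}
  obtain ⟨c, hcS⟩ := hS
  have hTne : T.Nonempty := ⟨c, {c}, Finset.singleton_nonempty c, by simpa, by simp⟩
  have wf : WellFounded ((· < ·) : Ideal R → Ideal R → Prop) :=
    wellFounded_lt
  obtain ⟨m, hmT, hmin⟩ := wf.has_min T hTne
  obtain ⟨F, hFne, hFS, hmF⟩ := hmT
  -- m ≤ every element of S
  have hle : ∀ C ∈ S, m ≤ C := by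
    intro C hC
    have hmem : m ⊓ C ∈ T := by
      refine ⟨insert C F, ⟨C, Finset.mem_insert_self _ _⟩, ?_, ?_⟩
      · intro x hx
        rcases Finset.mem_insert.mp (by exact_mod_cast hx) with h | h
        · exact h ▸ hC
        · exact hFS (by exact_mod_cast h)
      · rw [Finset.inf_insert, hmF, inf_comm]; rfl
    have hnl : ¬ m ⊓ C < m := hmin _ hmem
    have heq : m ⊓ C = m := eq_of_le_of_not_lt inf_le_left hnl
    exact heq ▸ inf_le_right
  have hmK : m ≤ K := (le_sInf hle).trans hinf
  obtain ⟨C, hCF, hCK⟩ := finset_inf_le K hK F hFne (hmF ▸ hmK)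
  exact ⟨C, hFS hCF, hCK⟩
end
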